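/- Let W : D → ℂ be a C² function on an open set D ⊂ ℂ with W(z) ≠ 0, satisfying ∂W/∂z̄ = (1/2)|W|². Define ξ : D → ℂ by ξ = (∂W/∂z)/W - W/2. Then ∂ξ/∂z̄ = 0 on D, i.e., ξ restricts to a holomorphic function on any solution of the PDE. -/

import Mathlib

open Complex ContinuousLinearMap


/-- The Wirtinger derivative `∂W/∂z = (1/2)(∂_x - i ∂_y) W`. -/
noncomputable def wirtingerZ (W : ℂ → ℂ) (z : ℂ) : ℂ :=
  (1 / 2 : ℂ) * (fderiv ℝ W z 1 - Complex.I * fderiv ℝ W z Complex.I)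

/-- The Wirtinger derivative `∂W/∂z̄ = (1/2)(∂_x + i ∂_y) W`. -/
noncomputable def wirtingerZbar (W : ℂ → ℂ) (z : ℂ) : ℂ :=
  (1 / 2 : ℂ) * (fderiv ℝ W z 1 + Complex.I * fderiv ℝ W z Complex.I)

/-- If `W` is a nonvanishing `C²` solution of `∂W/∂z̄ = (1/2)|W|²` on an open
set `D`, then `ξ = W_z/W - W/2` satisfies `∂ξ/∂z̄ = 0` on `D`: it is a
holomorphic Darboux invariant. -/
theorem stmt9 (D : Set ℂ) (hD : IsOpen D) (W : ℂ → ℂ)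
    (hW : ContDiffOn ℝ 2 W D)
    (hWne : ∀ z ∈ D, W z ≠ 0)
    (hpde : ∀ z ∈ D, wirtingerZbar W z = (1 / 2 : ℂ) * (Complex.normSq (W z) : ℝ)) :
    let ξ : ℂ → ℂ := fun z => wirtingerZ W z / W z - W z / 2
    ∀ z ∈ D, wirtingerZbar ξ z = 0 := by
  intro ξ z hz
  have hzD : D ∈ nhds z := hD.mem_nhds hz
  have hW2 : ContDiffAt ℝ 2 W z := hW.contDiffAt hzD
  have hWd : HasFDerivAt W (fderiv ℝ W z) z :=
    (hW2.differentiableAt (by norm_num)).hasFDerivAt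
  have hF1 : ContDiffAt ℝ 1 (fderiv ℝ W) z := hW2.fderiv_right (by norm_num)
  have hFd : HasFDerivAt (fderiv ℝ W) (fderiv ℝ (fderiv ℝ W) z) z :=
    (hF1.differentiableAt (by norm_num)).hasFDerivAt
  set A := fderiv ℝ W z with hA
  set S := fderiv ℝ (fderiv ℝ W) z with hS
  set w := W z with hw0
  have hw : w ≠ 0 := hWne z hz
  have hEv : ∀ v : ℂ, HasFDerivAt (fun y => fderiv ℝ W y v)
      ((ContinuousLinearMap.apply ℝ ℂ v).comp S) z := fun v =>
    (ContinuousLinearMap.apply ℝ ℂ v).hasFDerivAt.comp z hFd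
  -- derivative of wirtingerZ W
  have hZd : HasFDerivAt (fun y => wirtingerZ W y)
      ((1/2 : ℂ) • (((ContinuousLinearMap.apply ℝ ℂ 1).comp S) -
        Complex.I • ((ContinuousLinearMap.apply ℝ ℂ Complex.I).comp S))) z := by
    have h := (((hEv 1).sub ((hEv Complex.I).const_mul Complex.I)).const_mul (1/2 : ℂ))
    simpa [wirtingerZ] using h
  have hinv : HasFDerivAt (fun y => (W y)⁻¹) ((-(w ^ 2)⁻¹) • A) z := by
    have h1 : HasDerivAt (fun y : ℂ => y⁻¹) (-(w ^ 2)⁻¹) w := hasDerivAt_inv hw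
    exact h1.comp_hasFDerivAt z hWd
  have hξd : HasFDerivAt ξ
      ((wirtingerZ W z) • ((-(w ^ 2)⁻¹) • A) +
        w⁻¹ • ((1/2 : ℂ) • (((ContinuousLinearMap.apply ℝ ℂ 1).comp S) -
          Complex.I • ((ContinuousLinearMap.apply ℝ ℂ Complex.I).comp S))) -
        (1/2 : ℂ) • A) z := by
    have h := (hZd.mul hinv).sub (hWd.const_mul (1/2 : ℂ))
    have hfun : ξ = fun y => wirtingerZ W y * (W y)⁻¹ - (1/2 : ℂ) * W y := by
      funext y; simp [ξ, div_eq_mul_inv]; ring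
    rw [hfun]
    exact h
  -- PDE differentiated
  have hconj : HasFDerivAt (fun y => (starRingEnd ℂ) (W y))
      ((Complex.conjCLE.toContinuousLinearMap).comp A) z :=
    Complex.conjCLE.toContinuousLinearMap.hasFDerivAt.comp z hWd
  have hG2 : HasFDerivAt (fun y => (1/2 : ℂ) * (W y * (starRingEnd ℂ) (W y)))
      ((1/2 : ℂ) • (w • ((Complex.conjCLE.toContinuousLinearMap).comp A) +
        ((starRingEnd ℂ) w) • A)) z :=
    (hWd.mul hconj).const_mul (1/2 : ℂ)
  have heq : (fun y => wirtingerZbar W y) =ᶠ[nhds z]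
      (fun y => (1/2 : ℂ) * (W y * (starRingEnd ℂ) (W y))) := by
    filter_upwards [hzD] with y hy
    rw [hpde y hy, Complex.mul_conj]
  have hG1 : HasFDerivAt (fun y => wirtingerZbar W y)
      ((1/2 : ℂ) • (((ContinuousLinearMap.apply ℝ ℂ 1).comp S) +
        Complex.I • ((ContinuousLinearMap.apply ℝ ℂ Complex.I).comp S))) z := by
    have h := (((hEv 1).add ((hEv Complex.I).const_mul Complex.I)).const_mul (1/2 : ℂ))
    simpa [wirtingerZbar] using h
  have huniq := hG1.unique (hG2.congr_of_eventuallyEq heq)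
  -- symmetry of second derivative
  have hsym : S 1 Complex.I = S Complex.I 1 := hW2.isSymmSndFDerivAt (by norm_num) 1 Complex.I
  have e1 : S 1 1 + Complex.I * S 1 Complex.I
      = w * (starRingEnd ℂ) (A 1) + (starRingEnd ℂ) w * A 1 := by
    have h := congrFun (congrArg DFunLike.coe huniq) 1
    simp only [ContinuousLinearMap.add_apply, ContinuousLinearMap.smul_apply,
      ContinuousLinearMap.coe_comp', Function.comp_apply, ContinuousLinearMap.apply_apply,
      smul_eq_mul, ContinuousLinearEquiv.coe_coe, Complex.conjCLE_apply] at h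
    linear_combination 2 * h
  have e2 : S Complex.I 1 + Complex.I * S Complex.I Complex.I
      = w * (starRingEnd ℂ) (A Complex.I) + (starRingEnd ℂ) w * A Complex.I := by
    have h := congrFun (congrArg DFunLike.coe huniq) Complex.I
    simp only [ContinuousLinearMap.add_apply, ContinuousLinearMap.smul_apply,
      ContinuousLinearMap.coe_comp', Function.comp_apply, ContinuousLinearMap.apply_apply,
      smul_eq_mul, ContinuousLinearEquiv.coe_coe, Complex.conjCLE_apply] at h
    linear_combination 2 * h
  have e3 : A 1 + Complex.I * A Complex.I = w * (starRingEnd ℂ) w := by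
    have h := hpde z hz
    rw [wirtingerZbar, ← Complex.mul_conj] at h
    rw [← hA, ← hw0] at h
    linear_combination 2 * h
  have e4 : (starRingEnd ℂ) (A 1) - Complex.I * (starRingEnd ℂ) (A Complex.I)
      = w * (starRingEnd ℂ) w := by
    have h := congrArg (starRingEnd ℂ) e3
    simp only [map_add, map_mul, Complex.conj_I, Complex.conj_conj] at h
    linear_combination h
  -- final computation
  rw [wirtingerZbar, hξd.fderiv]
  rw [show wirtingerZ W z = (1/2 : ℂ) * (A 1 - Complex.I * A Complex.I) from rfl]
  simp only [ContinuousLinearMap.add_apply, ContinuousLinearMap.sub_apply,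
    ContinuousLinearMap.smul_apply, ContinuousLinearMap.coe_comp', Function.comp_apply,
    ContinuousLinearMap.apply_apply, smul_eq_mul]
  field_simp
  linear_combination (w : ℂ) * e1 - Complex.I * w * e2 - 2 * Complex.I * w * hsym
    - ((A 1 - Complex.I * A Complex.I) + w^2) * e3 + w^2 * e4
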